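/- Let ζ be a primitive 12th root of unity and T = diag(ζ, ζ⁵, ζ⁷, ζ¹¹) acting on Sym^n(C^4). Then the trace of T⁻¹ on Sym^n(C^4) equals 1 if n ≡ 0 or 2 mod 12, equals -1 if n ≡ 6 or 8 mod 12, and equals 0 otherwise. -/

import Mathlib

open Finset Complex

/-- The trace on `Sym^n(ℂ^4)` of a diagonal matrix with eigenvalues `d 0, d 1, d 2, d 3`:
the sum over all monomials of degree `n` in the basis vectors of the product of the
corresponding eigenvalues. -/
noncomputable def symTrace (d : Fin 4 → ℂ) (n : ℕ) : ℂ :=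
  ∑ x ∈ Finset.Nat.antidiagonalTuple 4 n, ∏ i, d i ^ x i

noncomputable def H (k : ℕ) (d : Fin k → ℂ) (n : ℕ) : ℂ :=
  ∑ x ∈ Finset.Nat.antidiagonalTuple k n, ∏ i, d i ^ x i

lemma sum_antidiagonalTuple_succ (k n : ℕ) (f : (Fin (k+1) → ℕ) → ℂ) :
    ∑ x ∈ Finset.Nat.antidiagonalTuple (k+1) n, f x =
      ∑ p ∈ Finset.HasAntidiagonal.antidiagonal n, ∑ y ∈ Finset.Nat.antidiagonalTuple k p.2,
        f (Fin.cons p.1 y) := by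
  rw [Finset.sum_sigma']
  refine Finset.sum_nbij' (fun x => ⟨(x 0, ∑ i, Fin.tail x i), Fin.tail x⟩)
    (fun p => Fin.cons p.1.1 p.2) ?_ ?_ ?_ ?_ ?_
  · intro x hx
    rw [Finset.Nat.mem_antidiagonalTuple] at hx
    simp only [Finset.mem_sigma, Finset.Nat.mem_antidiagonalTuple, Finset.HasAntidiagonal.mem_antidiagonal]
    exact ⟨by rw [← hx, Fin.sum_univ_succ]; rfl, trivial⟩
  · intro p hp
    simp only [Finset.mem_sigma, Finset.Nat.mem_antidiagonalTuple,
      Finset.HasAntidiagonal.mem_antidiagonal] at hp ⊢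
    rw [Fin.sum_univ_succ]
    simp [hp.2, hp.1]
  · intro x hx; exact Fin.cons_self_tail x
  · intro p hp
    simp only [Finset.mem_sigma, Finset.Nat.mem_antidiagonalTuple,
      Finset.HasAntidiagonal.mem_antidiagonal] at hp
    refine Sigma.ext ?_ (heq_of_eq (by simp [Fin.tail_cons]))
    simp only [Fin.cons_zero, Fin.tail_cons]
    exact Prod.ext rfl hp.2
  · intro x hx; simp [Fin.cons_self_tail]

lemma H_succ_eq (k : ℕ) (d : Fin (k+1) → ℂ) (n : ℕ) :
    H (k+1) d n = ∑ p ∈ Finset.HasAntidiagonal.antidiagonal n, d 0 ^ p.1 * H k (Fin.tail d) p.2 := by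
  rw [H, sum_antidiagonalTuple_succ]
  refine Finset.sum_congr rfl fun p _ => ?_
  rw [H, Finset.mul_sum]
  refine Finset.sum_congr rfl fun y _ => ?_
  rw [Fin.prod_univ_succ]
  simp [Fin.tail]

lemma H_step (k : ℕ) (d : Fin (k+1) → ℂ) (n : ℕ) :
    H (k+1) d (n+1) = d 0 * H (k+1) d n + H k (Fin.tail d) (n+1) := by
  rw [H_succ_eq, H_succ_eq, Finset.Nat.antidiagonal_succ, Finset.sum_cons, Finset.sum_map,
    Finset.mul_sum]
  simp only [Function.Embedding.coeFn_mk, Prod.map_fst, Prod.map_snd, id_eq, pow_zero, one_mul]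
  rw [add_comm]
  congr 1
  refine Finset.sum_congr rfl fun p _ => ?_
  simp [Function.Embedding.prodMap, pow_succ]
  ring

lemma H_zero (k : ℕ) (d : Fin k → ℂ) : H k d 0 = 1 := by
  rw [H, Finset.Nat.antidiagonalTuple_zero_right]
  simp

lemma H_one_eq (d : Fin 1 → ℂ) (n : ℕ) : H 1 d n = d 0 ^ n := by
  rw [H, Finset.Nat.antidiagonalTuple_one]
  simp

lemma seq_rec4 (a b c e : ℂ) (A B C D : ℕ → ℂ)
    (hA : ∀ n, A (n+1) = a * A n + B (n+1))
    (hB : ∀ n, B (n+1) = b * B n + C (n+1))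
    (hC : ∀ n, C (n+1) = c * C n + D (n+1))
    (hD : ∀ n, D (n+1) = e * D n) (n : ℕ) :
    A (n+4) = (a+b+c+e) * A (n+3) - (a*b+a*c+a*e+b*c+b*e+c*e) * A (n+2)
      + (a*b*c+a*b*e+a*c*e+b*c*e) * A (n+1) - (a*b*c*e) * A n := by
  linear_combination (hA (n+3)) - (b+c+e) * (hA (n+2)) + (b*c+b*e+c*e) * (hA (n+1))
    - (b*c*e) * (hA n) + (hB (n+3)) - (c+e) * (hB (n+2)) + (c*e) * (hB (n+1))
    + (hC (n+3)) - e * (hC (n+2)) + (hD (n+3))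

noncomputable def fval (n : ℕ) : ℂ :=
  if n % 12 = 0 ∨ n % 12 = 2 then 1
  else if n % 12 = 6 ∨ n % 12 = 8 then -1
  else 0

lemma fval_step (m : ℕ) : fval (m+4) = fval (m+2) - fval m := by
  have h : m % 12 < 12 := Nat.mod_lt _ (by norm_num)
  rw [fval, fval, fval, show (m+4) % 12 = (m % 12 + 4) % 12 by omega,
    show (m+2) % 12 = (m % 12 + 2) % 12 by omega]
  generalize m % 12 = r at h ⊢
  interval_cases r <;> norm_num


/-- `ζ` a primitive 12th root of unity, `T = diag(ζ,ζ⁵,ζ⁷,ζ¹¹)`: the trace of `T⁻¹`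
on `Sym^n(ℂ^4)` is `1` if `n ≡ 0, 2 mod 12`, `-1` if `n ≡ 6, 8 mod 12`, else `0`. -/
theorem trace_inv_diag_zeta12 (ζ : ℂ) (hζ : IsPrimitiveRoot ζ 12) (n : ℕ) :
    symTrace ![ζ⁻¹, (ζ ^ 5)⁻¹, (ζ ^ 7)⁻¹, (ζ ^ 11)⁻¹] n =
      if n % 12 = 0 ∨ n % 12 = 2 then 1
      else if n % 12 = 6 ∨ n % 12 = 8 then -1
      else 0 := by
  have h12 : ζ ^ 12 = 1 := hζ.pow_eq_one
  have h6ne : ζ ^ 6 ≠ 1 := hζ.pow_ne_one_of_pos_of_lt (by norm_num) (by norm_num)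
  have h4ne : ζ ^ 4 ≠ 1 := hζ.pow_ne_one_of_pos_of_lt (by norm_num) (by norm_num)
  have h6 : ζ ^ 6 = -1 := by
    have h : (ζ^6 - 1) * (ζ^6 + 1) = 0 := by linear_combination h12
    rcases mul_eq_zero.1 h with h | h
    · exact absurd (by linear_combination h) h6ne
    · linear_combination h
  have hphi : ζ^4 - ζ^2 + 1 = 0 := by
    have h : (ζ^2 + 1) * (ζ^4 - ζ^2 + 1) = 0 := by linear_combination h6
    rcases mul_eq_zero.1 h with h | h
    · exact absurd (show ζ^4 = 1 by linear_combination (ζ^2 - 1) * h) h4ne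
    · exact h
  have hdv : ![ζ⁻¹, (ζ^5)⁻¹, (ζ^7)⁻¹, (ζ^11)⁻¹] = ![ζ^11, ζ^7, ζ^5, ζ] := by
    have e1 : ζ⁻¹ = ζ^11 := inv_eq_of_mul_eq_one_left (by linear_combination h12)
    have e2 : (ζ^5)⁻¹ = ζ^7 := inv_eq_of_mul_eq_one_left (by linear_combination h12)
    have e3 : (ζ^7)⁻¹ = ζ^5 := inv_eq_of_mul_eq_one_left (by linear_combination h12)
    have e4 : (ζ^11)⁻¹ = ζ := inv_eq_of_mul_eq_one_left (by linear_combination h12)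
    rw [e1, e2, e3, e4]
  rw [hdv]
  set d4 : Fin 4 → ℂ := ![ζ^11, ζ^7, ζ^5, ζ] with hd4
  have t0 : d4 0 = ζ^11 := rfl
  have t1 : Fin.tail d4 0 = ζ^7 := rfl
  have t2 : Fin.tail (Fin.tail d4) 0 = ζ^5 := rfl
  have t3 : Fin.tail (Fin.tail (Fin.tail d4)) 0 = ζ := rfl
  have hsym : ∀ m, symTrace d4 m = H 4 d4 m := fun m => rfl
  have hA : ∀ m, H 4 d4 (m+1) = ζ^11 * H 4 d4 m + H 3 (Fin.tail d4) (m+1) := by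
    intro m; have h := H_step 3 d4 m; rwa [t0] at h
  have hB : ∀ m, H 3 (Fin.tail d4) (m+1) = ζ^7 * H 3 (Fin.tail d4) m
      + H 2 (Fin.tail (Fin.tail d4)) (m+1) := by
    intro m; have h := H_step 2 (Fin.tail d4) m; rwa [t1] at h
  have hC : ∀ m, H 2 (Fin.tail (Fin.tail d4)) (m+1) = ζ^5 * H 2 (Fin.tail (Fin.tail d4)) m
      + H 1 (Fin.tail (Fin.tail (Fin.tail d4))) (m+1) := by
    intro m; have h := H_step 1 (Fin.tail (Fin.tail d4)) m; rwa [t2] at h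
  have hD : ∀ m, H 1 (Fin.tail (Fin.tail (Fin.tail d4))) m = ζ ^ m := by
    intro m; rw [H_one_eq, t3]
  have hD' : ∀ m, H 1 (Fin.tail (Fin.tail (Fin.tail d4))) (m+1)
      = ζ * H 1 (Fin.tail (Fin.tail (Fin.tail d4))) m := by
    intro m; rw [hD, hD, pow_succ]; ring
  have he1 : ζ^11 + ζ^7 + ζ^5 + ζ = 0 := by linear_combination (ζ + ζ^3 + ζ^5 + ζ^7) * hphi
  have he2 : ζ^11*ζ^7 + ζ^11*ζ^5 + ζ^11*ζ + ζ^7*ζ^5 + ζ^7*ζ + ζ^5*ζ = -1 := by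
    linear_combination (1 + ζ^2 + ζ^8 + ζ^10 + 2*ζ^12 + ζ^14) * hphi
  have he3 : ζ^11*ζ^7*ζ^5 + ζ^11*ζ^7*ζ + ζ^11*ζ^5*ζ + ζ^7*ζ^5*ζ = 0 := by
    linear_combination (ζ^13 + ζ^15 + ζ^17 + ζ^19) * hphi
  have he4 : ζ^11*ζ^7*ζ^5*ζ = 1 := by linear_combination (-1 + -1*ζ^2 + ζ^6 + ζ^8 + -1*ζ^12 + -1*ζ^14 + ζ^18 + ζ^20) * hphi
  have key : ∀ m, H 4 d4 (m+4) = H 4 d4 (m+2) - H 4 d4 m := by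
    intro m
    have h := seq_rec4 (ζ^11) (ζ^7) (ζ^5) ζ (H 4 d4) (H 3 (Fin.tail d4))
      (H 2 (Fin.tail (Fin.tail d4))) (H 1 (Fin.tail (Fin.tail (Fin.tail d4))))
      hA hB hC hD' m
    rw [he1, he2, he3, he4] at h
    rw [h]; ring
  -- base values
  have hA0 : H 4 d4 0 = 1 := H_zero _ _
  have hB0 : H 3 (Fin.tail d4) 0 = 1 := H_zero _ _
  have hC0 : H 2 (Fin.tail (Fin.tail d4)) 0 = 1 := H_zero _ _
  have hC1 : H 2 (Fin.tail (Fin.tail d4)) 1 = ζ + ζ^5 := by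
    have h := hC 0; norm_num at h; rw [h, hC0, hD]; ring
  have hC2 : H 2 (Fin.tail (Fin.tail d4)) 2 = ζ^2 + ζ^6 + ζ^10 := by
    have h := hC 1; norm_num at h; rw [h, hC1, hD]; ring
  have hC3 : H 2 (Fin.tail (Fin.tail d4)) 3 = ζ^3 + ζ^7 + ζ^11 + ζ^15 := by
    have h := hC 2; norm_num at h; rw [h, hC2, hD]; ring
  have hB1 : H 3 (Fin.tail d4) 1 = ζ + ζ^5 + ζ^7 := by
    have h := hB 0; norm_num at h; rw [h, hB0, hC1]; ring
  have hB2 : H 3 (Fin.tail d4) 2 = ζ^2 + ζ^6 + ζ^8 + ζ^10 + ζ^12 + ζ^14 := by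
    have h := hB 1; norm_num at h; rw [h, hB1, hC2]; ring
  have hB3 : H 3 (Fin.tail d4) 3 = ζ^3 + ζ^7 + ζ^9 + ζ^11 + ζ^13 + 2*ζ^15 + ζ^17 + ζ^19 + ζ^21 := by
    have h := hB 2; norm_num at h; rw [h, hB2, hC3]; ring
  have hA1 : H 4 d4 1 = 0 := by
    have h := hA 0; norm_num at h; rw [h, hA0, hB1]
    linear_combination (ζ + ζ^3 + ζ^5 + ζ^7) * hphi
  have hA2 : H 4 d4 2 = 1 := by
    have h := hA 1; norm_num at h; rw [h, hA1, hB2]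
    linear_combination (-1 + ζ^4 + 2*ζ^6 + 2*ζ^8 + ζ^10) * hphi
  have hA3 : H 4 d4 3 = 0 := by
    have h := hA 2; norm_num at h; rw [h, hA2, hB3]
    linear_combination (ζ^3 + ζ^5 + ζ^7 + ζ^9 + 2*ζ^11 + 2*ζ^13 + 2*ζ^15 + ζ^17) * hphi
  rw [hsym]
  suffices hmain : ∀ m, H 4 d4 m = fval m by rw [hmain n, fval]
  intro m
  induction m using Nat.strong_induction_on with
  | _ m ih =>
    rcases lt_or_ge m 4 with h4 | h4
    · interval_cases m
      · rw [hA0, fval]; norm_num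
      · rw [hA1, fval]; norm_num
      · rw [hA2, fval]; norm_num
      · rw [hA3, fval]; norm_num
    · obtain ⟨k, rfl⟩ : ∃ k, m = k + 4 := ⟨m - 4, by omega⟩
      rw [key k, ih (k+2) (by omega), ih k (by omega), fval_step]
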